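/- Define f : ℂ² → ℙ¹ by f(z,w) := [(z+w)² : (z−w)²] for (z,w) ≠ (0,0) and f(0,0) := [1:1]. Then f is separately holomorphic on the cross X := (ℂ×ℂ) ∪ (ℂ×ℂ) = ℂ² in the sense that for every fixed a ∈ ℂ the maps w ↦ f(a,w) and z ↦ f(z,a) are holomorphic from ℂ to ℙ¹, but f is not continuous at (0,0). -/

import Mathlib

open scoped Manifold Topology
open Set MeasureTheory
open scoped LinearAlgebra.Projectivization

section Preliminaries

variable {EM : Type*} [NormedAddCommGroup EM] [NormedSpace ℂ EM]
  {HM : Type*} [TopologicalSpace HM] (I : ModelWithCorners ℂ EM HM)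
  {M : Type*} [TopologicalSpace M] [ChartedSpace HM M]

/-- A holomorphic disc in `Ω ⊆ M`: a map holomorphic on a neighborhood of the closed
unit disc, sending the closed unit disc into `Ω`. -/
def IsHoloDiscIn (Ω : Set M) (φ : ℂ → M) : Prop :=
  ∃ r : ℝ, 1 < r ∧ MDifferentiableOn 𝓘(ℂ, ℂ) I φ (Metric.ball 0 r) ∧
    ∀ t ∈ Metric.closedBall (0 : ℂ) 1, φ t ∈ Ω

/-- Normalized average of `g` over the unit circle. -/
noncomputable def circleAvg (g : ℂ → ℝ) : ℝ :=
  (2 * Real.pi)⁻¹ * ∫ θ in (0:ℝ)..(2 * Real.pi), g (Complex.exp (θ * Complex.I))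

/-- A real-valued function is plurisubharmonic on `Ω`: upper semicontinuous and satisfying
the sub-mean value inequality along every holomorphic disc contained in `Ω`. -/
def IsPSHOn (Ω : Set M) (u : M → ℝ) : Prop :=
  UpperSemicontinuousOn u Ω ∧
  ∀ φ : ℂ → M, IsHoloDiscIn I Ω φ → u (φ 0) ≤ circleAvg (fun t => u (φ t))

/-- An `EReal`-valued plurisubharmonic function on `Ω` (sub-mean value inequality is imposed on
all truncations `max u c`, `c : ℝ`). -/
def IsPSHOnE (Ω : Set M) (u : M → EReal) : Prop :=
  UpperSemicontinuousOn u Ω ∧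
  ∀ φ : ℂ → M, IsHoloDiscIn I Ω φ → ∀ c : ℝ,
    u (φ 0) ≤ ((circleAvg (fun t => (max (u (φ t)) (c : EReal)).toReal) : ℝ) : EReal)

/-- `A` is pluripolar in `Ω`: it is contained in the `-∞` set of an `EReal`-valued
plurisubharmonic function on `Ω` which is not identically `-∞` on any connected
component of `Ω`. -/
def IsPluripolarIn (Ω A : Set M) : Prop :=
  ∃ u : M → EReal, IsPSHOnE I Ω u ∧ (∀ x ∈ A, u x = ⊥) ∧
    ∀ x ∈ Ω, ∃ y ∈ connectedComponentIn Ω x, u y ≠ ⊥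

/-- `A` is locally pluripolar in `M`. -/
def IsLocallyPluripolar (A : Set M) : Prop :=
  ∀ a ∈ A, ∃ U : Set M, IsOpen U ∧ a ∈ U ∧ IsPluripolarIn I U (A ∩ U)

/-- The relative extremal function `h_{A,Ω}` : the upper envelope of plurisubharmonic
functions on `Ω` bounded by `1` on `Ω` and by `0` on `A`. -/
noncomputable def relExt (Ω A : Set M) (z : M) : ℝ :=
  sSup {y : ℝ | ∃ u : M → ℝ, IsPSHOn I Ω u ∧ (∀ x ∈ Ω, u x ≤ 1) ∧
    (∀ x ∈ A, u x ≤ 0) ∧ u z = y}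

/-- Upper semicontinuous regularization within `Ω`. -/
noncomputable def uscRegIn (Ω : Set M) (h : M → ℝ) (z : M) : ℝ :=
  Filter.limsup h (nhdsWithin z Ω)

/-- The set `A*` of points at which `A` is locally pluriregular. -/
def pluriregPts (A : Set M) : Set M :=
  {a | a ∈ closure A ∧ ∀ U : Set M, IsOpen U → a ∈ U →
    uscRegIn U (relExt I U (A ∩ U)) a = 0}

/-- The plurisubharmonic measure `ω̃(·, A, Ω)` of `A` relative to `Ω`. -/
noncomputable def psm (Ω A : Set M) (z : M) : ℝ :=
  uscRegIn Ω (relExt I Ω (pluriregPts I A ∩ Ω)) z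

end Preliminaries

section Hartogs

/-- The unit polydisc in `ℂⁿ`. -/
def polydisc (n : ℕ) : Set (Fin n → ℂ) := {z | ∀ j, ‖z j‖ < 1}

/-- The Hartogs figure `H_{p+2}(r)` in dimension `p + 2`. -/
def hartogsFigure (p : ℕ) (r : ℝ) : Set (Fin (p + 2) → ℂ) :=
  {z ∈ polydisc (p + 2) |
    (∀ j : Fin (p + 1), ‖z j.castSucc‖ < r) ∨
      1 - r < ‖z (Fin.last (p + 1))‖}

variable {EZ : Type*} [NormedAddCommGroup EZ] [NormedSpace ℂ EZ]
  {HZ : Type*} [TopologicalSpace HZ] (IZ : ModelWithCorners ℂ EZ HZ)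
  (Z : Type*) [TopologicalSpace Z] [ChartedSpace HZ Z]

/-- `Z` possesses the Hartogs extension property: `Z` is second countable and every
holomorphic map from a Hartogs figure into `Z` extends holomorphically to the polydisc. -/
def HasHartogsExtension : Prop :=
  SecondCountableTopology Z ∧
  ∀ (p : ℕ) (r : ℝ), 0 < r → r < 1 →
    ∀ f : (Fin (p + 2) → ℂ) → Z,
      MDifferentiableOn 𝓘(ℂ, Fin (p + 2) → ℂ) IZ f (hartogsFigure p r) →
      ∃ g : (Fin (p + 2) → ℂ) → Z,
        MDifferentiableOn 𝓘(ℂ, Fin (p + 2) → ℂ) IZ g (polydisc (p + 2)) ∧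
        EqOn g f (hartogsFigure p r)

end Hartogs


noncomputable instance : TopologicalSpace (ℙ ℂ (ℂ × ℂ)) :=
  instTopologicalSpaceQuotient

/-- A map into `ℙ¹` is holomorphic if it admits local holomorphic nonvanishing lifts. -/
def HoloToP1 (g : ℂ → ℙ ℂ (ℂ × ℂ)) : Prop :=
  ∀ a : ℂ, ∃ (U : Set ℂ) (v : ℂ → ℂ × ℂ), IsOpen U ∧ a ∈ U ∧
    DifferentiableOn ℂ v U ∧
    ∀ t ∈ U, ∃ h : v t ≠ 0, g t = Projectivization.mk ℂ (v t) h


/-- The open set of points of `ℙ¹` whose second homogeneous coordinate is nonzero. -/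
def Wset : Set (ℙ ℂ (ℂ × ℂ)) := {p | p.rep.2 ≠ 0}

lemma mem_Wset {v : ℂ × ℂ} (h : v ≠ 0) :
    Projectivization.mk ℂ v h ∈ Wset ↔ v.2 ≠ 0 := by
  obtain ⟨a, ha⟩ := Projectivization.exists_smul_eq_mk_rep ℂ v h
  have h2 : (Projectivization.mk ℂ v h).rep.2 = (a : ℂ) * v.2 := by
    rw [← ha]; rfl
  simp [Wset, h2, a.ne_zero]

lemma open_Wset : IsOpen Wset := by
  have : IsOpen (Quotient.mk (projectivizationSetoid ℂ (ℂ × ℂ)) ⁻¹' Wset) := by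
    have h : (Quotient.mk (projectivizationSetoid ℂ (ℂ × ℂ)) ⁻¹' Wset)
        = {v : {v : ℂ × ℂ // v ≠ 0} | (v : ℂ × ℂ).2 ≠ 0} := by
      ext v
      exact mem_Wset v.2
    rw [h]
    exact (isOpen_ne_fun (by fun_prop) continuous_const).preimage continuous_subtype_val
  exact isOpen_coinduced.mpr this

lemma mk_sq_eq_one {t : ℂ} (ht : t ≠ 0) (h : ((t ^ 2 : ℂ), (t ^ 2 : ℂ)) ≠ (0 : ℂ × ℂ)) :
    Projectivization.mk ℂ ((t ^ 2 : ℂ), (t ^ 2 : ℂ)) h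
      = Projectivization.mk ℂ ((1 : ℂ), (1 : ℂ)) (by simp) := by
  rw [Projectivization.mk_eq_mk_iff']
  exact ⟨t ^ 2, by simp [Prod.smul_def]⟩

/-- the Alehyane–Zeriahi example `f(z,w) = [(z+w)² : (z−w)²]`,
`f(0,0) = [1:1]`, is separately holomorphic on `ℂ × ℂ` but not continuous at `(0,0)`. -/
theorem stmt19 (f : ℂ × ℂ → ℙ ℂ (ℂ × ℂ))
    (hf0 : f (0, 0) = Projectivization.mk ℂ ((1 : ℂ), (1 : ℂ)) (by simp))
    (hf : ∀ p : ℂ × ℂ, p ≠ (0, 0) →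
      ∃ h : ((p.1 + p.2) ^ 2, (p.1 - p.2) ^ 2) ≠ (0 : ℂ × ℂ),
        f p = Projectivization.mk ℂ ((p.1 + p.2) ^ 2, (p.1 - p.2) ^ 2) h) :
    (∀ a : ℂ, HoloToP1 (fun w => f (a, w)) ∧ HoloToP1 (fun z => f (z, a))) ∧
    ¬ ContinuousAt f (0, 0) := by
  constructor
  · intro a
    constructor
    · -- w ↦ f (a, w)
      by_cases ha : a = 0
      · subst ha
        intro b
        refine ⟨Set.univ, fun _ => ((1 : ℂ), (1 : ℂ)), isOpen_univ, trivial,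
          differentiableOn_const _, fun t _ => ⟨by simp, ?_⟩⟩
        by_cases ht : t = 0
        · subst ht; exact hf0
        · obtain ⟨h, he⟩ := hf (0, t) (by simp [ht])
          show f (0, t) = _
          rw [he]
          have h' : (((0 : ℂ) + t) ^ 2, ((0 : ℂ) - t) ^ 2) = ((t ^ 2 : ℂ), (t ^ 2 : ℂ)) := by
            ring_nf
          rw [show Projectivization.mk ℂ (((0 : ℂ) + t) ^ 2, ((0 : ℂ) - t) ^ 2) h
              = Projectivization.mk ℂ ((t ^ 2 : ℂ), (t ^ 2 : ℂ)) (h' ▸ h) by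
            congr 1]
          exact mk_sq_eq_one ht _
      · intro b
        refine ⟨Set.univ, fun w => ((a + w) ^ 2, (a - w) ^ 2), isOpen_univ, trivial, ?_, ?_⟩
        · apply DifferentiableOn.prodMk <;> fun_prop
        · intro t _
          have hv : (((a + t) ^ 2 : ℂ), ((a - t) ^ 2 : ℂ)) ≠ (0 : ℂ × ℂ) := by
            intro hz
            have h1 := congrArg Prod.fst hz
            have h2 := congrArg Prod.snd hz
            simp only at h1 h2
            have e1 : a + t = 0 := by
              have := pow_eq_zero_iff (n := 2) two_ne_zero |>.mp h1; exact this
            have e2 : a - t = 0 := by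
              have := pow_eq_zero_iff (n := 2) two_ne_zero |>.mp h2; exact this
            exact absurd (by linear_combination (e1 + e2) / 2) ha
          obtain ⟨h, he⟩ := hf (a, t) (by simp [Prod.ext_iff, ha])
          exact ⟨hv, he⟩
    · -- z ↦ f (z, a)
      by_cases ha : a = 0
      · subst ha
        intro b
        refine ⟨Set.univ, fun _ => ((1 : ℂ), (1 : ℂ)), isOpen_univ, trivial,
          differentiableOn_const _, fun t _ => ⟨by simp, ?_⟩⟩
        by_cases ht : t = 0
        · subst ht; exact hf0
        · obtain ⟨h, he⟩ := hf (t, 0) (by simp [ht])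
          show f (t, 0) = _
          rw [he]
          have h' : ((t + (0 : ℂ)) ^ 2, (t - (0 : ℂ)) ^ 2) = ((t ^ 2 : ℂ), (t ^ 2 : ℂ)) := by
            ring_nf
          rw [show Projectivization.mk ℂ ((t + (0 : ℂ)) ^ 2, (t - (0 : ℂ)) ^ 2) h
              = Projectivization.mk ℂ ((t ^ 2 : ℂ), (t ^ 2 : ℂ)) (h' ▸ h) by
            congr 1]
          exact mk_sq_eq_one ht _
      · intro b
        refine ⟨Set.univ, fun z => ((z + a) ^ 2, (z - a) ^ 2), isOpen_univ, trivial, ?_, ?_⟩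
        · apply DifferentiableOn.prodMk <;> fun_prop
        · intro t _
          have hv : (((t + a) ^ 2 : ℂ), ((t - a) ^ 2 : ℂ)) ≠ (0 : ℂ × ℂ) := by
            intro hz
            have h1 := congrArg Prod.fst hz
            have h2 := congrArg Prod.snd hz
            simp only at h1 h2
            have e1 : t + a = 0 := by
              have := pow_eq_zero_iff (n := 2) two_ne_zero |>.mp h1; exact this
            have e2 : t - a = 0 := by
              have := pow_eq_zero_iff (n := 2) two_ne_zero |>.mp h2; exact this
            exact absurd (by linear_combination (e1 - e2) / 2) ha
          obtain ⟨h, he⟩ := hf (t, a) (by simp [Prod.ext_iff, ha])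
          exact ⟨hv, he⟩
  · -- discontinuity at (0,0)
    intro hc
    have hW : Wset ∈ nhds (f (0, 0)) := by
      refine open_Wset.mem_nhds ?_
      rw [hf0]
      rw [mem_Wset]
      exact one_ne_zero
    have hpre : f ⁻¹' Wset ∈ nhds ((0 : ℂ), (0 : ℂ)) := hc hW
    have hdiag : Filter.Tendsto (fun t : ℂ => ((t, t) : ℂ × ℂ)) (nhdsWithin 0 {0}ᶜ)
        (nhds ((0 : ℂ), (0 : ℂ))) := by
      apply Filter.Tendsto.mono_left _ nhdsWithin_le_nhds
      exact Continuous.tendsto (by fun_prop) 0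
    have hev : ∀ᶠ t : ℂ in nhdsWithin 0 {0}ᶜ, f (t, t) ∈ Wset := hdiag hpre
    have hnot : ∀ t : ℂ, t ≠ 0 → f (t, t) ∉ Wset := by
      intro t ht
      obtain ⟨h, he⟩ := hf (t, t) (by simp [ht])
      rw [he, mem_Wset]
      simp
    have : ∀ᶠ t : ℂ in nhdsWithin 0 {0}ᶜ, False := by
      filter_upwards [hev, self_mem_nhdsWithin] with t h1 h2
      exact hnot t h2 h1
    rw [Filter.eventually_false_iff_eq_bot] at this
    exact (inferInstance : Filter.NeBot (nhdsWithin (0 : ℂ) {0}ᶜ)).ne this
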